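/- Let U be an ultrafilter on a set X. The ultrapower Ult(Ord, U) (equivalently, the membership relation of Ult(V, U) restricted to classes of ordinal-valued functions) is well-founded if and only if U is countably complete. -/

import Mathlib

/-- An ultrafilter is countably complete if it is closed under countable intersections. -/
def CountablyComplete {X : Type*} (U : Ultrafilter X) : Prop :=
  ∀ A : ℕ → Set X, (∀ n, A n ∈ U) → (⋂ n, A n) ∈ U

private lemma no_descent {α : Type*} {r : α → α → Prop} (wf : WellFounded r)
    (f : ℕ → α) (h : ∀ n, r (f (n + 1)) (f n)) : False := by
  obtain ⟨n, hn⟩ := wf.min_mem (Set.range f) ⟨f 0, 0, rfl⟩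
  exact wf.not_lt_min (Set.range f) ⟨n + 1, rfl⟩ (hn ▸ h n)

/-- For an ultrafilter `U` on a set `X`, the ultrapower
`Ult(Ord, U)` — i.e. the relation `[f]_U < [g]_U` iff `{x | f x < g x} ∈ U` on
(representatives of) classes of ordinal-valued functions — is well-founded if and
only if `U` is countably complete. -/
theorem stmt_2 {X : Type*} (U : Ultrafilter X) :
    WellFounded (fun f g : X → Ordinal => {x | f x < g x} ∈ U) ↔
      CountablyComplete U := by
  classical
  set r : (X → Ordinal) → (X → Ordinal) → Prop :=
    fun f g => {x | f x < g x} ∈ U with hr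
  constructor
  · intro wf A hA
    by_contra hI
    -- B n : decreasing intersections
    set B : ℕ → Set X := fun n => ⋂ k ∈ Finset.range (n + 1), A k with hB
    have hBU : ∀ n, B n ∈ U := fun n =>
      (Finset.iInter_mem_sets (Finset.range (n + 1))).2 fun k _ => hA k
    have hBmono : ∀ {m n : ℕ}, m ≤ n → B n ⊆ B m := by
      intro m n hmn
      exact Set.biInter_subset_biInter_left fun k hk =>
        Finset.mem_range.2 (lt_of_lt_of_le (Finset.mem_range.1 hk) (by omega))
    have hIB : (⋂ n, A n)ᶜ ∈ U := Ultrafilter.compl_mem_iff_notMem.2 hI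
    set f : ℕ → X → Ordinal := fun n x =>
      if h : ∃ m, x ∉ B m then ((Nat.find h - n : ℕ) : Ordinal) else 0 with hf
    refine no_descent wf f fun n => ?_
    have : B n ∩ (⋂ m, A m)ᶜ ⊆ {x | f (n + 1) x < f n x} := by
      intro x hx
      obtain ⟨hxB, hxI⟩ := hx
      have hex : ∃ m, x ∉ B m := by
        rw [Set.mem_compl_iff, Set.mem_iInter] at hxI
        push_neg at hxI
        obtain ⟨k, hk⟩ := hxI
        exact ⟨k, fun hxk => hk (by
          have : B k ⊆ A k := Set.biInter_subset_of_mem (Finset.self_mem_range_succ k)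
          exact this hxk)⟩
      have hlt : n < Nat.find hex := by
        rw [Nat.lt_find_iff]
        intro m hm hxm
        exact hxm (hBmono hm hxB)
      show f (n + 1) x < f n x
      simp only [hf, dif_pos hex]
      exact_mod_cast Nat.sub_lt_sub_left hlt (Nat.lt_succ_self n)
    exact Filter.mem_of_superset (Filter.inter_mem (hBU n) hIB) this
  · intro hcc
    haveI : IsIrrefl (X → Ordinal) r :=
      ⟨fun f hf => Filter.empty_notMem (U : Filter X) (by simpa [hr] using hf)⟩
    haveI : IsTrans (X → Ordinal) r := ⟨fun f g h hfg hgh => by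
      refine Filter.mem_of_superset (Filter.inter_mem hfg hgh) ?_
      rintro x ⟨h1, h2⟩
      exact lt_trans (Set.mem_setOf_eq ▸ h1) (Set.mem_setOf_eq ▸ h2)⟩
    haveI : IsStrictOrder (X → Ordinal) r := ⟨⟩
    rw [RelEmbedding.wellFounded_iff_isEmpty]
    constructor
    intro g
    set f : ℕ → X → Ordinal := fun n => g n with hfdef
    have hdesc : ∀ n, r (f (n + 1)) (f n) := fun n =>
      g.map_rel_iff.2 (Nat.lt_succ_self n)
    have hmem : (⋂ n, {x | f (n + 1) x < f n x}) ∈ U :=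
      hcc _ fun n => hdesc n
    obtain ⟨x, hx⟩ := U.nonempty_of_mem hmem
    simp only [Set.mem_iInter, Set.mem_setOf_eq] at hx
    exact no_descent (Ordinal.lt_wf) (fun n => f n x) hx
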